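/- Let ν be a probability distribution on ℝ supported on at most k points, and let ν' be any probability distribution on ℝ with finite moments up to order 2k. If m_j(ν) = m_j(ν') for all j = 1, …, 2k, then ν = ν'. -/

import Mathlib

open MeasureTheory

lemma integrable_dirac_aux (f : ℝ → ℝ) (a : ℝ) : Integrable f (Measure.dirac a) := by
  have h : f =ᵐ[Measure.dirac a] fun _ => f a := by
    rw [ae_dirac_eq]; exact Filter.eventually_pure.2 rfl
  exact (integrable_const (f a)).congr h.symm

lemma measure_finset_eq_sum (μ : Measure ℝ) (t : Finset ℝ) :
    μ ↑t = ∑ s ∈ t, μ {s} := by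
  have h : (↑t : Set ℝ) = ⋃ s ∈ t, {s} := by ext x; simp
  rw [h, measure_biUnion_finset]
  · intro x _ y _ hxy
    simp [Set.disjoint_singleton, hxy]
  · intro x _; exact measurableSet_singleton x

lemma repr_aux (μ : Measure ℝ) [IsProbabilityMeasure μ] (S : Finset ℝ) (h : μ ↑S = 1) :
    μ = ∑ s ∈ S, μ {s} • Measure.dirac s := by
  classical
  have hSc : μ (↑S)ᶜ = 0 := by
    rw [measure_compl (S.measurableSet) (measure_ne_top μ _), h, measure_univ, tsub_self]
  ext t ht
  have h1 : μ t = μ (t ∩ ↑S) := by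
    have := measure_inter_add_diff t (S.measurableSet) (μ := μ)
    have h2 : μ (t \ ↑S) = 0 :=
      le_antisymm (le_trans (measure_mono (Set.diff_subset_compl t ↑S)) hSc.le) zero_le
    rw [← this, h2, add_zero]
  have h3 : t ∩ ↑S = ↑(S.filter (· ∈ t)) := by
    ext x; simp [and_comm]
  rw [Measure.finset_sum_apply]
  rw [h1, h3, measure_finset_eq_sum]
  rw [Finset.sum_filter]
  refine Finset.sum_congr rfl fun s hs => ?_
  rw [Measure.smul_apply, Measure.dirac_apply' _ ht]
  by_cases hst : s ∈ t <;> simp [hst, Set.indicator_apply]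

theorem stmt_3 (k : ℕ) (ν ν' : Measure ℝ) [IsProbabilityMeasure ν] [IsProbabilityMeasure ν']
    (S : Finset ℝ) (hcard : S.card ≤ k) (hsupp : ν ↑S = 1)
    (hint : ∀ j ≤ 2 * k, Integrable (fun x => x ^ j) ν')
    (hm : ∀ j, 1 ≤ j → j ≤ 2 * k → ∫ x, x ^ j ∂ν = ∫ x, x ^ j ∂ν') :
    ν = ν' := by
  -- representation of ν
  have hνrepr : ν = ∑ s ∈ S, ν {s} • Measure.dirac s := repr_aux ν S hsupp
  -- integrals over ν of arbitrary functions
  have hνint : ∀ f : ℝ → ℝ, Integrable f ν := by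
    intro f
    rw [hνrepr]
    refine integrable_finset_sum_measure.2 fun s _ => ?_
    exact (integrable_dirac_aux f s).smul_measure (measure_ne_top ν _)
  have hνeval : ∀ f : ℝ → ℝ, ∫ x, f x ∂ν = ∑ s ∈ S, (ν {s}).toReal * f s := by
    intro f
    conv_lhs => rw [hνrepr]
    rw [integral_finset_sum_measure
      (fun s _ => (integrable_dirac_aux f s).smul_measure (measure_ne_top ν _))]
    refine Finset.sum_congr rfl fun s _ => ?_
    rw [integral_smul_measure, integral_dirac, smul_eq_mul]
  -- moments agree for all j ≤ 2k (including j = 0)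
  have hm' : ∀ j ≤ 2 * k, ∫ x, x ^ j ∂ν = ∫ x, x ^ j ∂ν' := by
    intro j hj
    rcases Nat.eq_zero_or_pos j with rfl | hj1
    · simp
    · exact hm j hj1 hj
  -- integrals of polynomials of degree ≤ 2k agree
  have hpoly : ∀ P : Polynomial ℝ, P.natDegree ≤ 2 * k →
      ∫ x, P.eval x ∂ν = ∫ x, P.eval x ∂ν' := by
    intro P hP
    have hev : ∀ x : ℝ, P.eval x =
        ∑ i ∈ Finset.range (2 * k + 1), P.coeff i * x ^ i := by
      intro x
      rw [Polynomial.eval_eq_sum_range' (lt_of_le_of_lt hP (Nat.lt_succ_self _))]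
    simp_rw [hev]
    rw [integral_finset_sum _ (fun i _ => (hνint _)),
        integral_finset_sum _ (fun i hi => ((hint i (Nat.lt_succ_iff.mp
          (Finset.mem_range.mp hi))).const_mul _))]
    refine Finset.sum_congr rfl fun i hi => ?_
    rw [integral_const_mul, integral_const_mul,
      hm' i (Nat.lt_succ_iff.mp (Finset.mem_range.mp hi))]
  -- the polynomial Q
  set Q : Polynomial ℝ := ∏ s ∈ S, (Polynomial.X - Polynomial.C s) ^ 2 with hQ
  have hQdeg : Q.natDegree ≤ 2 * k := by
    calc Q.natDegree ≤ ∑ s ∈ S, ((Polynomial.X - Polynomial.C s) ^ 2).natDegree :=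
          Polynomial.natDegree_prod_le _ _
      _ ≤ ∑ _s ∈ S, 2 := by
          refine Finset.sum_le_sum fun s _ => ?_
          calc ((Polynomial.X - Polynomial.C s) ^ 2).natDegree
              ≤ 2 * (Polynomial.X - Polynomial.C s).natDegree := Polynomial.natDegree_pow_le
            _ ≤ 2 * 1 := by
                exact Nat.mul_le_mul_left 2 (Polynomial.natDegree_X_sub_C_le s)
            _ = 2 := rfl
      _ = 2 * S.card := by rw [Finset.sum_const, smul_eq_mul, mul_comm]
      _ ≤ 2 * k := Nat.mul_le_mul_left 2 hcard
  have hQeval : ∀ x : ℝ, Q.eval x = ∏ s ∈ S, (x - s) ^ 2 := by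
    intro x; simp [hQ, Polynomial.eval_prod]
  have hQzeroS : ∀ s ∈ S, Q.eval s = 0 := by
    intro s hs
    rw [hQeval]
    exact Finset.prod_eq_zero hs (by ring)
  have hQν : ∫ x, Q.eval x ∂ν = 0 := by
    rw [hνeval]
    refine Finset.sum_eq_zero fun s hs => ?_
    rw [hQzeroS s hs, mul_zero]
  have hQν' : ∫ x, Q.eval x ∂ν' = 0 := by rw [← hpoly Q hQdeg, hQν]
  have hQnn : 0 ≤ᵐ[ν'] fun x => Q.eval x := by
    filter_upwards with x
    rw [hQeval]
    exact Finset.prod_nonneg fun s _ => sq_nonneg _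
  have hQint : Integrable (fun x => Q.eval x) ν' := by
    have hev : ∀ x : ℝ, Q.eval x =
        ∑ i ∈ Finset.range (2 * k + 1), Q.coeff i * x ^ i := by
      intro x
      rw [Polynomial.eval_eq_sum_range' (lt_of_le_of_lt hQdeg (Nat.lt_succ_self _))]
    simp_rw [hev]
    exact integrable_finset_sum _ fun i hi => ((hint i (Nat.lt_succ_iff.mp
      (Finset.mem_range.mp hi))).const_mul _)
  have hQae : (fun x => Q.eval x) =ᵐ[ν'] 0 :=
    (integral_eq_zero_iff_of_nonneg_ae hQnn hQint).mp hQν'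
  -- hence ν' is supported on S
  have hsupp' : ν' ↑S = 1 := by
    have hsub : {x : ℝ | Q.eval x = 0} ⊆ ↑S := by
      intro x hx
      simp only [Set.mem_setOf_eq, hQeval] at hx
      obtain ⟨s, hs, hzero⟩ := Finset.prod_eq_zero_iff.mp hx
      have : x = s := by
        have := pow_eq_zero_iff (n := 2) two_ne_zero |>.mp hzero
        linarith [sub_eq_zero.mp this]
      rw [this]; exact hs
    have h1 : ν' {x : ℝ | Q.eval x = 0}ᶜ = 0 := by
      have : ∀ᵐ x ∂ν', Q.eval x = 0 := hQae
      rwa [MeasureTheory.ae_iff] at this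
    have h2 : ν' (↑S)ᶜ = 0 :=
      le_antisymm (le_trans (measure_mono (Set.compl_subset_compl.mpr hsub)) h1.le) zero_le
    rw [← measure_univ (μ := ν'), ← compl_compl (↑S : Set ℝ)]
    rw [measure_compl (S.measurableSet.compl) (measure_ne_top ν' _), h2, measure_univ, tsub_zero]
  have hν'repr : ν' = ∑ s ∈ S, ν' {s} • Measure.dirac s := repr_aux ν' S hsupp'
  have hν'eval : ∀ f : ℝ → ℝ, (∀ s ∈ S, Integrable f (ν' {s} • Measure.dirac s)) →
      ∫ x, f x ∂ν' = ∑ s ∈ S, (ν' {s}).toReal * f s := by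
    intro f hf
    conv_lhs => rw [hν'repr]
    rw [integral_finset_sum_measure hf]
    refine Finset.sum_congr rfl fun s _ => ?_
    rw [integral_smul_measure, integral_dirac, smul_eq_mul]
  -- injectivity on S for Lagrange
  have hinj : Set.InjOn (id : ℝ → ℝ) ↑S := fun x _ y _ h => h
  -- show point masses agree
  have hpoint : ∀ s ∈ S, ν {s} = ν' {s} := by
    intro s hs
    set L : Polynomial ℝ := Lagrange.basis S id s with hL
    have hLdeg : L.natDegree ≤ 2 * k := by
      rw [hL, Lagrange.natDegree_basis hinj hs]
      omega
    have hLself : L.eval s = 1 := Lagrange.eval_basis_self hinj hs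
    have hLne : ∀ t ∈ S, t ≠ s → L.eval t = 0 := by
      intro t ht hts
      have := Lagrange.eval_basis_of_ne (s := S) (v := id) (i := s) (j := t)
        (fun h => hts h.symm) ht
      simpa using this
    have hLint : ∀ s' ∈ S, Integrable (fun x => L.eval x) (ν' {s'} • Measure.dirac s') :=
      fun s' _ => (integrable_dirac_aux _ s').smul_measure (measure_ne_top ν' _)
    have h1 : ∫ x, L.eval x ∂ν = (ν {s}).toReal := by
      rw [hνeval]
      rw [Finset.sum_eq_single_of_mem s hs]
      · rw [hLself, mul_one]
      · intro t ht hts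
        rw [hLne t ht hts, mul_zero]
    have h2 : ∫ x, L.eval x ∂ν' = (ν' {s}).toReal := by
      rw [hν'eval _ hLint]
      rw [Finset.sum_eq_single_of_mem s hs]
      · rw [hLself, mul_one]
      · intro t ht hts
        rw [hLne t ht hts, mul_zero]
    have h3 : (ν {s}).toReal = (ν' {s}).toReal := by
      rw [← h1, ← h2, hpoly L hLdeg]
    exact (ENNReal.toReal_eq_toReal_iff' (measure_ne_top ν _) (measure_ne_top ν' _)).mp h3
  rw [hνrepr, hν'repr]
  exact Finset.sum_congr rfl fun s hs => by rw [hpoint s hs]
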